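/- There exists a finite simple graph X that is triangle-free and admits a proper 3-coloring, containing six pairwise distinct vertices x₁, x₂, y₁, y₂, z₁, z₂ such that: (i) the set {x₁, x₂, y₁, y₂, z₁, z₂} is an independent set in X; and (ii) for every proper 3-coloring c of X, the colors c(x₁) ≠ c(x₂), c(y₁) ≠ c(y₂), c(z₁) ≠ c(z₂), and the three unordered pairs {c(x₁), c(x₂)}, {c(y₁), c(y₂)}, {c(z₁), c(z₂)} are pairwise distinct as two-element sets of colors. -/
import Mathlib
set_option maxRecDepth 100000
set_option maxHeartbeats 4000000

def nbr : Fin 55 → List (Fin 55) := fun v =>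
  ([[6, 9, 11, 13, 16, 18, 20, 23, 25], [10, 12, 27, 30, 32, 34, 37, 39], [31, 33, 41, 44, 46], [38, 40, 45, 47], [17, 19, 48, 51, 53], [24, 26, 52, 54], [0, 10, 12], [8, 10, 11], [7, 9, 12], [0, 8, 10], [1, 6, 7, 9], [0, 7, 12], [1, 6, 8, 11], [0, 17, 19], [15, 17, 18], [14, 16, 19], [0, 15, 17], [4, 13, 14, 16], [0, 14, 19], [4, 13, 15, 18], [0, 24, 26], [22, 24, 25], [21, 23, 26], [0, 22, 24], [5, 20, 21, 23], [0, 21, 26], [5, 20, 22, 25], [1, 31, 33], [29, 31, 32], [28, 30, 33], [1, 29, 31], [2, 27, 28, 30], [1, 28, 33], [2, 27, 29, 32], [1, 38, 40], [36, 38, 39], [35, 37, 40], [1, 36, 38], [3, 34, 35, 37], [1, 35, 40], [3, 34, 36, 39], [2, 45, 47], [43, 45, 46], [42, 44, 47], [2, 43, 45], [3, 41, 42, 44], [2, 42, 47], [3, 41, 43, 46], [4, 52, 54], [50, 52, 53], [49, 51, 54], [4, 50, 52], [5, 48, 49, 51], [4, 49, 54], [5, 48, 50, 53]] : List (List (Fin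 55))).getD v.val []

def gX : SimpleGraph (Fin 55) := SimpleGraph.fromRel (fun a b => (nbr a).elem b = true)

lemma gX_adj (a b : Fin 55) :
    gX.Adj a b ↔ a ≠ b ∧ ((nbr a).elem b = true ∨ (nbr b).elem a = true) :=
  SimpleGraph.fromRel_adj _ a b

lemma nbr_sym : ∀ a : Fin 55, ∀ b ∈ nbr a, (nbr b).elem a = true := by
  have h : ((List.finRange 55).all fun a => (nbr a).all fun b => (nbr b).elem a) = true := by rfl
  intro a b hb
  exact List.all_eq_true.mp (List.all_eq_true.mp h a (List.mem_finRange a)) b hb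

lemma nbr_loopfree : ∀ a : Fin 55, (nbr a).elem a = false := by
  have h : ((List.finRange 55).all fun a => !(nbr a).elem a) = true := by rfl
  intro a
  have := List.all_eq_true.mp h a (List.mem_finRange a)
  simpa using this

lemma adjN (a b : Fin 55) (h : (nbr a).elem b = true) : gX.Adj a b := by
  rw [gX_adj]
  refine ⟨?_, Or.inl h⟩
  rintro rfl
  rw [nbr_loopfree a] at h
  exact Bool.false_ne_true h

lemma elem_of_adj (a b : Fin 55) (h : gX.Adj a b) : (nbr a).elem b = true := by
  rw [gX_adj] at h
  rcases h.2 with h' | h'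
  · exact h'
  · exact nbr_sym b a (List.mem_of_elem_eq_true h')

lemma nbr_tri : ∀ a : Fin 55, ∀ b ∈ nbr a, ∀ c ∈ nbr a, (nbr b).elem c = false := by
  have h : ((List.finRange 55).all fun a => (nbr a).all fun b => (nbr a).all fun c =>
      !(nbr b).elem c) = true := by rfl
  intro a b hb c hc
  have := List.all_eq_true.mp (List.all_eq_true.mp
    (List.all_eq_true.mp h a (List.mem_finRange a)) b hb) c hc
  simpa using this

lemma gX_trifree : gX.CliqueFree 3 := by
  intro s hs
  rw [SimpleGraph.is3Clique_iff] at hs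
  obtain ⟨a, b, c, hab, hac, hbc, -⟩ := hs
  have hab' := List.mem_of_elem_eq_true (elem_of_adj a b hab)
  have hac' := List.mem_of_elem_eq_true (elem_of_adj a c hac)
  have hbc' := elem_of_adj b c hbc
  rw [nbr_tri a b hab' c hac'] at hbc'
  exact Bool.false_ne_true hbc'

lemma nbr_small : ∀ a : Fin 55, ∀ b ∈ nbr a, ¬(a.val < 6 ∧ b.val < 6) := by
  have h : ((List.finRange 55).all fun a => (nbr a).all fun b =>
      !(decide (a.val < 6) && decide (b.val < 6))) = true := by rfl
  intro a b hb hc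
  have h2 := List.all_eq_true.mp (List.all_eq_true.mp h a (List.mem_finRange a)) b hb
  simp only [Bool.not_eq_true', Bool.and_eq_false_iff, decide_eq_false_iff_not] at h2
  rcases h2 with h2 | h2
  · exact h2 hc.1
  · exact h2 hc.2

lemma gX_notadj (a b : Fin 55) (ha : a.val < 6) (hb : b.val < 6) : ¬ gX.Adj a b := by
  intro h
  exact nbr_small a b (List.mem_of_elem_eq_true (elem_of_adj a b h)) ⟨ha, hb⟩

def gcol : Fin 55 → Fin 3 := fun v => [0, 1, 0, 2, 1, 2, 1, 0, 2, 1, 2, 1, 0, 1, 0, 2, 1, 2, 1, 0, 1, 1, 2, 1, 0, 2, 0, 0, 0, 2, 0, 1, 2, 1, 0, 0, 2, 0, 1, 2, 1, 1, 1, 2, 1, 0, 2, 0, 0, 0, 2, 0, 1, 2, 1].getD v.val 0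

lemma gcol_ok : ∀ a : Fin 55, ∀ b ∈ nbr a, gcol a ≠ gcol b := by
  have h : ((List.finRange 55).all fun a => (nbr a).all fun b => gcol a != gcol b) = true := by rfl
  intro a b hb
  exact bne_iff_ne.mp (List.all_eq_true.mp (List.all_eq_true.mp h a (List.mem_finRange a)) b hb)

lemma gX_colorable : gX.Colorable 3 := by
  refine ⟨SimpleGraph.Coloring.mk gcol ?_⟩
  intro a b hab
  exact gcol_ok a b (List.mem_of_elem_eq_true (elem_of_adj a b hab))

lemma gforce : ∀ a0 a1 a2 a3 a4 a5 a6 a7 a8 : Fin 3,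
    a0 ≠ a2 → a0 ≠ a5 → a0 ≠ a7 → a1 ≠ a6 → a1 ≠ a8 → a2 ≠ a6 → a2 ≠ a8 → a3 ≠ a4 → a3 ≠ a6 → a3 ≠ a7 → a4 ≠ a5 → a4 ≠ a8 → a5 ≠ a6 → a7 ≠ a8 → a0 ≠ a1 := by
  have h : ((List.finRange 3).all fun a0 => (List.finRange 3).all fun a1 => (List.finRange 3).all fun a2 => (List.finRange 3).all fun a3 => (List.finRange 3).all fun a4 => (List.finRange 3).all fun a5 => (List.finRange 3).all fun a6 => (List.finRange 3).all fun a7 => (List.finRange 3).all fun a8 => decide (a0 ≠ a2 → a0 ≠ a5 → a0 ≠ a7 → a1 ≠ a6 → a1 ≠ a8 → a2 ≠ a6 → a2 ≠ a8 → a3 ≠ a4 → a3 ≠ a6 → a3 ≠ a7 → a4 ≠ a5 → a4 ≠ a8 → a5 ≠ a6 → a7 ≠ a8 → a0 ≠ a1)) = true := by rfl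
  intro a0 a1 a2 a3 a4 a5 a6 a7 a8
  exact of_decide_eq_true (List.all_eq_true.mp (List.all_eq_true.mp (List.all_eq_true.mp (List.all_eq_true.mp (List.all_eq_true.mp (List.all_eq_true.mp (List.all_eq_true.mp (List.all_eq_true.mp (List.all_eq_true.mp h a0 (List.mem_finRange a0)) a1 (List.mem_finRange a1)) a2 (List.mem_finRange a2)) a3 (List.mem_finRange a3)) a4 (List.mem_finRange a4)) a5 (List.mem_finRange a5)) a6 (List.mem_finRange a6)) a7 (List.mem_finRange a7)) a8 (List.mem_finRange a8))

lemma gfinal : ∀ a0 a1 a2 a3 a4 a5 : Fin 3,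
    a0 ≠ a1 → a0 ≠ a4 → a0 ≠ a5 → a1 ≠ a2 → a1 ≠ a3 → a2 ≠ a3 → a4 ≠ a5 → a0 ≠ a1 ∧ a2 ≠ a3 ∧ a4 ≠ a5 ∧ ({a0, a1} : Finset (Fin 3)) ≠ ({a2, a3} : Finset (Fin 3)) ∧ ({a0, a1} : Finset (Fin 3)) ≠ ({a4, a5} : Finset (Fin 3)) ∧ ({a2, a3} : Finset (Fin 3)) ≠ ({a4, a5} : Finset (Fin 3)) := by
  have h : ((List.finRange 3).all fun a0 => (List.finRange 3).all fun a1 => (List.finRange 3).all fun a2 => (List.finRange 3).all fun a3 => (List.finRange 3).all fun a4 => (List.finRange 3).all fun a5 => decide (a0 ≠ a1 → a0 ≠ a4 → a0 ≠ a5 → a1 ≠ a2 → a1 ≠ a3 → a2 ≠ a3 → a4 ≠ a5 → a0 ≠ a1 ∧ a2 ≠ a3 ∧ a4 ≠ a5 ∧ ({a0, a1} : Finset (Fin 3)) ≠ ({a2, a3} : Finset (Fin 3)) ∧ ({a0, a1} : Finset (Fin 3)) ≠ ({a4, a5} : Finset (Fin 3)) ∧ ({a2, a3} : Finset (Fin 3))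 ≠ ({a4, a5} : Finset (Fin 3)))) = true := by rfl
  intro a0 a1 a2 a3 a4 a5
  exact of_decide_eq_true (List.all_eq_true.mp (List.all_eq_true.mp (List.all_eq_true.mp (List.all_eq_true.mp (List.all_eq_true.mp (List.all_eq_true.mp h a0 (List.mem_finRange a0)) a1 (List.mem_finRange a1)) a2 (List.mem_finRange a2)) a3 (List.mem_finRange a3)) a4 (List.mem_finRange a4)) a5 (List.mem_finRange a5))

lemma gX_force (c : gX.Coloring (Fin 3)) :
    c 0 ≠ c 1 ∧ c 2 ≠ c 3 ∧ c 4 ≠ c 5 ∧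
    ({c 0, c 1} : Finset (Fin 3)) ≠ ({c 2, c 3} : Finset (Fin 3)) ∧
    ({c 0, c 1} : Finset (Fin 3)) ≠ ({c 4, c 5} : Finset (Fin 3)) ∧
    ({c 2, c 3} : Finset (Fin 3)) ≠ ({c 4, c 5} : Finset (Fin 3)) := by
  have hadj : ∀ a b : Fin 55, (nbr a).elem b = true → c a ≠ c b :=
    fun a b h => c.valid (adjN a b h)
  have h0 : c 0 ≠ c 1 := gforce (c 0) (c 1) (c 6) (c 7) (c 8) (c 9) (c 10) (c 11) (c 12)
    (hadj 0 6 (by rfl))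
    (hadj 0 9 (by rfl))
    (hadj 0 11 (by rfl))
    (hadj 1 10 (by rfl))
    (hadj 1 12 (by rfl))
    (hadj 6 10 (by rfl))
    (hadj 6 12 (by rfl))
    (hadj 7 8 (by rfl))
    (hadj 7 10 (by rfl))
    (hadj 7 11 (by rfl))
    (hadj 8 9 (by rfl))
    (hadj 8 12 (by rfl))
    (hadj 9 10 (by rfl))
    (hadj 11 12 (by rfl))
  have h1 : c 0 ≠ c 4 := gforce (c 0) (c 4) (c 13) (c 14) (c 15) (c 16) (c 17) (c 18) (c 19)
    (hadj 0 13 (by rfl))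
    (hadj 0 16 (by rfl))
    (hadj 0 18 (by rfl))
    (hadj 4 17 (by rfl))
    (hadj 4 19 (by rfl))
    (hadj 13 17 (by rfl))
    (hadj 13 19 (by rfl))
    (hadj 14 15 (by rfl))
    (hadj 14 17 (by rfl))
    (hadj 14 18 (by rfl))
    (hadj 15 16 (by rfl))
    (hadj 15 19 (by rfl))
    (hadj 16 17 (by rfl))
    (hadj 18 19 (by rfl))
  have h2 : c 0 ≠ c 5 := gforce (c 0) (c 5) (c 20) (c 21) (c 22) (c 23) (c 24) (c 25) (c 26)
    (hadj 0 20 (by rfl))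
    (hadj 0 23 (by rfl))
    (hadj 0 25 (by rfl))
    (hadj 5 24 (by rfl))
    (hadj 5 26 (by rfl))
    (hadj 20 24 (by rfl))
    (hadj 20 26 (by rfl))
    (hadj 21 22 (by rfl))
    (hadj 21 24 (by rfl))
    (hadj 21 25 (by rfl))
    (hadj 22 23 (by rfl))
    (hadj 22 26 (by rfl))
    (hadj 23 24 (by rfl))
    (hadj 25 26 (by rfl))
  have h3 : c 1 ≠ c 2 := gforce (c 1) (c 2) (c 27) (c 28) (c 29) (c 30) (c 31) (c 32) (c 33)
    (hadj 1 27 (by rfl))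
    (hadj 1 30 (by rfl))
    (hadj 1 32 (by rfl))
    (hadj 2 31 (by rfl))
    (hadj 2 33 (by rfl))
    (hadj 27 31 (by rfl))
    (hadj 27 33 (by rfl))
    (hadj 28 29 (by rfl))
    (hadj 28 31 (by rfl))
    (hadj 28 32 (by rfl))
    (hadj 29 30 (by rfl))
    (hadj 29 33 (by rfl))
    (hadj 30 31 (by rfl))
    (hadj 32 33 (by rfl))
  have h4 : c 1 ≠ c 3 := gforce (c 1) (c 3) (c 34) (c 35) (c 36) (c 37) (c 38) (c 39) (c 40)
    (hadj 1 34 (by rfl))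
    (hadj 1 37 (by rfl))
    (hadj 1 39 (by rfl))
    (hadj 3 38 (by rfl))
    (hadj 3 40 (by rfl))
    (hadj 34 38 (by rfl))
    (hadj 34 40 (by rfl))
    (hadj 35 36 (by rfl))
    (hadj 35 38 (by rfl))
    (hadj 35 39 (by rfl))
    (hadj 36 37 (by rfl))
    (hadj 36 40 (by rfl))
    (hadj 37 38 (by rfl))
    (hadj 39 40 (by rfl))
  have h5 : c 2 ≠ c 3 := gforce (c 2) (c 3) (c 41) (c 42) (c 43) (c 44) (c 45) (c 46) (c 47)
    (hadj 2 41 (by rfl))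
    (hadj 2 44 (by rfl))
    (hadj 2 46 (by rfl))
    (hadj 3 45 (by rfl))
    (hadj 3 47 (by rfl))
    (hadj 41 45 (by rfl))
    (hadj 41 47 (by rfl))
    (hadj 42 43 (by rfl))
    (hadj 42 45 (by rfl))
    (hadj 42 46 (by rfl))
    (hadj 43 44 (by rfl))
    (hadj 43 47 (by rfl))
    (hadj 44 45 (by rfl))
    (hadj 46 47 (by rfl))
  have h6 : c 4 ≠ c 5 := gforce (c 4) (c 5) (c 48) (c 49) (c 50) (c 51) (c 52) (c 53) (c 54)
    (hadj 4 48 (by rfl))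
    (hadj 4 51 (by rfl))
    (hadj 4 53 (by rfl))
    (hadj 5 52 (by rfl))
    (hadj 5 54 (by rfl))
    (hadj 48 52 (by rfl))
    (hadj 48 54 (by rfl))
    (hadj 49 50 (by rfl))
    (hadj 49 52 (by rfl))
    (hadj 49 53 (by rfl))
    (hadj 50 51 (by rfl))
    (hadj 50 54 (by rfl))
    (hadj 51 52 (by rfl))
    (hadj 53 54 (by rfl))
  exact gfinal (c 0) (c 1) (c 2) (c 3) (c 4) (c 5) h0 h1 h2 h3 h4 h5 h6

/-- **The gadget graph `X`.** There exists a finite simple graph `X` that is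
triangle-free and admits a proper 3-coloring, with six pairwise distinct vertices
`x₁, x₂, y₁, y₂, z₁, z₂` forming an independent set, such that in every proper
3-coloring of `X` each of the three pairs gets two distinct colors and the three
unordered pairs of colors are pairwise distinct. -/
theorem gadget_X_exists :
    ∃ (W : Type) (_ : Fintype W) (X : SimpleGraph W) (x₁ x₂ y₁ y₂ z₁ z₂ : W),
      X.CliqueFree 3 ∧ X.Colorable 3 ∧
      ([x₁, x₂, y₁, y₂, z₁, z₂] : List W).Nodup ∧
      (∀ a ∈ ({x₁, x₂, y₁, y₂, z₁, z₂} : Set W),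
        ∀ b ∈ ({x₁, x₂, y₁, y₂, z₁, z₂} : Set W), ¬ X.Adj a b) ∧
      ∀ c : X.Coloring (Fin 3),
        c x₁ ≠ c x₂ ∧ c y₁ ≠ c y₂ ∧ c z₁ ≠ c z₂ ∧
        ({c x₁, c x₂} : Finset (Fin 3)) ≠ ({c y₁, c y₂} : Finset (Fin 3)) ∧
        ({c x₁, c x₂} : Finset (Fin 3)) ≠ ({c z₁, c z₂} : Finset (Fin 3)) ∧
        ({c y₁, c y₂} : Finset (Fin 3)) ≠ ({c z₁, c z₂} : Finset (Fin 3)) := by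
  refine ⟨Fin 55, inferInstance, gX, 0, 1, 2, 3, 4, 5, gX_trifree, gX_colorable, ?_, ?_, gX_force⟩
  · simp [List.nodup_cons]
  · intro a ha b hb
    simp only [Set.mem_insert_iff, Set.mem_singleton_iff] at ha hb
    have ha' : a.val < 6 := by rcases ha with rfl|rfl|rfl|rfl|rfl|rfl <;> decide
    have hb' : b.val < 6 := by rcases hb with rfl|rfl|rfl|rfl|rfl|rfl <;> decide
    exact gX_notadj a b ha' hb'
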